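/- For integers 1 ≤ u ≤ n and p ∈ [0,1], with Ω_d = C(n,d) p^d (1-p)^(n-d), the probability that a slot has reduced degree 1 when u users are unresolved satisfies Σ_{d=1}^{n-u+1} Ω_d · u · C(n-u,d-1)/C(n,d) = u p (1-p)^(u-1). -/

import Mathlib

/-- With `Ω_d = C(n,d) p^d (1-p)^(n-d)`, the probability that a slot has reduced degree 1
when `u` users are unresolved satisfies
`Σ_{d=1}^{n-u+1} Ω_d · u · C(n-u,d-1)/C(n,d) = u p (1-p)^(u-1)`. -/
theorem reduced_degree_one (n u : ℕ) (hu : 1 ≤ u) (hun : u ≤ n)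
    (p : ℝ) (hp0 : 0 ≤ p) (hp1 : p ≤ 1) :
    ∑ d ∈ Finset.Icc 1 (n - u + 1),
      (n.choose d : ℝ) * p ^ d * (1 - p) ^ (n - d) *
        ((u : ℝ) * ((n - u).choose (d - 1) : ℝ) / (n.choose d : ℝ))
      = (u : ℝ) * p * (1 - p) ^ (u - 1) := by
  set m := n - u with hm
  rw [← Finset.Ico_add_one_right_eq_Icc, Finset.sum_Ico_eq_sum_range]
  have hrange : m + 1 + 1 - 1 = m + 1 := by omega
  rw [hrange]
  have hkey : ∀ k ∈ Finset.range (m + 1),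
      (n.choose (1 + k) : ℝ) * p ^ (1 + k) * (1 - p) ^ (n - (1 + k)) *
        ((u : ℝ) * ((n - u).choose (1 + k - 1) : ℝ) / (n.choose (1 + k) : ℝ))
      = (u : ℝ) * p * (1 - p) ^ (u - 1) *
        (p ^ k * (1 - p) ^ (m - k) * (m.choose k : ℝ)) := by
    intro k hk
    simp only [Finset.mem_range] at hk
    have hkm : k ≤ m := by omega
    have hc : (n.choose (1 + k) : ℝ) ≠ 0 := by
      have h1 : 1 + k ≤ n := by omega
      exact_mod_cast (Nat.choose_pos h1).ne'
    have he : n - (1 + k) = (m - k) + (u - 1) := by omega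
    have hk1 : 1 + k - 1 = k := by omega
    rw [he, hk1, pow_add, pow_add, pow_one, ← hm]
    field_simp
  rw [Finset.sum_congr rfl hkey, ← Finset.mul_sum, ← add_pow p (1 - p) m]
  simp
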